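/- For single indices: χ_{-i, c} f_{-r,s} = c·f_{-r,s} + f_{-(i-1),s} f_{-r,-i} for -r ≤ -i < 0, and χ_{i,c} f_{-r,s} = c·f_{-r,s} − f_{-r,i-1} f_{i,s} for 0 < i ≤ s, as identities in U(G⁻ ⊕ H) modulo the left ideal U(G)G⁺. -/
import Mathlib


/-! We model the universal enveloping superalgebra `U(sl(m+1/n+1))` faithfully by
working in an arbitrary ring `U` equipped with elements `E a b` (the images of the
matrix units `E_{ab}`, `1 ≤ a,b ≤ m+n+2`) satisfying the super-commutation
relations of `gl(m+1/n+1)`; an identity holds in the enveloping algebra iff it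
holds in every such `U`. -/

/-- Parity of the matrix unit `E_{ab}` (1-based indices): odd iff exactly one of
`a, b` lies in the second block `{m+2,…,m+n+2}`. -/
abbrev podd (m : ℕ) (a b : ℤ) : Bool :=
  xor (decide ((m : ℤ) + 1 < a)) (decide ((m : ℤ) + 1 < b))

/-- The sign `(−1)^{p(ab)p(cd)}`. -/
abbrev ssgn (m : ℕ) (a b c d : ℤ) : ℤ :=
  if podd m a b && podd m c d then -1 else 1

/-- The defining super-commutation relations of `gl(m+1/n+1)`:
`[E_{ab}, E_{cd}] = δ_{bc} E_{ad} − (−1)^{p(ab)p(cd)} δ_{da} E_{cb}`. -/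
def glRel (m n : ℕ) {U : Type*} [Ring U] (E : ℤ → ℤ → U) : Prop :=
  ∀ a b c d : ℤ,
    1 ≤ a → a ≤ (m : ℤ) + n + 2 → 1 ≤ b → b ≤ (m : ℤ) + n + 2 →
    1 ≤ c → c ≤ (m : ℤ) + n + 2 → 1 ≤ d → d ≤ (m : ℤ) + n + 2 →
    E a b * E c d = ssgn m a b c d • (E c d * E a b) +
      ((if b = c then E a d else 0) - ssgn m a b c d • (if d = a then E c b else 0))

/-- The root vector `e_{ij} = E_{m+i+1, m+j+2}` for `i ≤ j` in `I = {-m,…,n}`. -/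
abbrev eV (m : ℕ) {U : Type*} [Ring U] (E : ℤ → ℤ → U) (i j : ℤ) : U :=
  E ((m : ℤ) + i + 1) ((m : ℤ) + j + 2)

/-- The root vector `f_{ij} = E_{m+j+2, m+i+1}`. -/
abbrev fV (m : ℕ) {U : Type*} [Ring U] (E : ℤ → ℤ → U) (i j : ℤ) : U :=
  E ((m : ℤ) + j + 2) ((m : ℤ) + i + 1)

/-- The Cartan element `h_{ij} = E_{m+i+1,m+i+1} − (−1)^{σ_{ij}} E_{m+j+2,m+j+2}`,
where `σ_{ij} = 1` iff `α_{ij}` is odd, i.e. `i ≤ 0 ≤ j`. -/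
abbrev hV (m : ℕ) {U : Type*} [Ring U] (E : ℤ → ℤ → U) (i j : ℤ) : U :=
  E ((m : ℤ) + i + 1) ((m : ℤ) + i + 1)
    - (if i ≤ 0 ∧ 0 ≤ j then (-1 : ℤ) else 1) • E ((m : ℤ) + j + 2) ((m : ℤ) + j + 2)

/-- The sign `(−1)^{|e_{ij}||e_{kl}|}` for root vectors: `e_{ij}` is odd iff `i ≤ 0 ≤ j`. -/
abbrev obr (i j k l : ℤ) : ℤ :=
  if (i ≤ 0 ∧ 0 ≤ j) ∧ (k ≤ 0 ∧ 0 ≤ l) then -1 else 1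

/-- The zero-weight element `Ω_i ∈ U(G)`:
`Ω_i = 1 − Σ_{-m ≤ k ≤ i} f_{ki} e_{ki}` for `i < 0`, and
`Ω_i = 1 − Σ_{i ≤ k ≤ n} f_{ik} e_{ik}` for `i > 0`. -/
noncomputable abbrev OmegaV (m n : ℕ) {U : Type*} [Ring U] (E : ℤ → ℤ → U) (i : ℤ) : U :=
  if i < 0 then 1 - ∑ k ∈ Finset.Icc (-(m : ℤ)) i, fV m E k i * eV m E k i
  else 1 - ∑ k ∈ Finset.Icc i (n : ℤ), fV m E i k * eV m E i k

/-- The element `ω_i ∈ ℂ ⊕ H`: `ω_i = m+1+i+h_{-m,i}` for `i < 0` and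
`ω_i = n+1−i+h_{i,n}` for `i > 0`. -/
noncomputable abbrev omegaV (m n : ℕ) {U : Type*} [Ring U] (E : ℤ → ℤ → U) (i : ℤ) : U :=
  if i < 0 then (((m : ℤ) + 1 + i : ℤ) : U) + hV m E (-(m : ℤ)) i
  else (((n : ℤ) + 1 - i : ℤ) : U) + hV m E i (n : ℤ)

/-- `X_i = ω_i + Ω_i`. -/
noncomputable abbrev XV (m n : ℕ) {U : Type*} [Ring U] (E : ℤ → ℤ → U) (i : ℤ) : U :=
  omegaV m n E i + OmegaV m n E i

/-- The left ideal `U(G)G⁺ ⊆ U(G)`: the span of elements `u * e(α)`, `α ∈ Δ⁺`,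
i.e. `u * E_{ab}` with `a < b` (strictly upper triangular matrix units). -/
noncomputable def Kid (m n : ℕ) {U : Type*} [Ring U] [Algebra ℂ U] (E : ℤ → ℤ → U) :
    Submodule ℂ U :=
  Submodule.span ℂ
    {x | ∃ u : U, ∃ a b : ℤ, 1 ≤ a ∧ a < b ∧ b ≤ (m : ℤ) + n + 2 ∧ x = u * E a b}

/-- The subalgebra `U(G⁻ ⊕ H) ⊆ U(G)`: generated by the `E_{ab}` with `b ≤ a`
(lower triangular and diagonal matrix units, i.e. the `f`'s and the Cartan). -/
noncomputable def Lsub (m n : ℕ) {U : Type*} [Ring U] [Algebra ℂ U] (E : ℤ → ℤ → U) :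
    Subalgebra ℂ U :=
  Algebra.adjoin ℂ {x | ∃ a b : ℤ, 1 ≤ b ∧ b ≤ a ∧ a ≤ (m : ℤ) + n + 2 ∧ x = E a b}

/-- The operator `χ_{i,c} g = c • g + φ(Ω_i g)`, where `φ` is the projection
`U(G) → U(G⁻ ⊕ H)` along `U(G)G⁺`. -/
noncomputable def chiOp (m n : ℕ) {U : Type*} [Ring U] [Algebra ℂ U] (E : ℤ → ℤ → U)
    (φ : U →ₗ[ℂ] U) (i : ℤ) (c : ℂ) (g : U) : U :=
  c • g + φ (OmegaV m n E i * g)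

private lemma podd_ff {m : ℕ} {a b : ℤ} (ha : a ≤ (m:ℤ)+1) (hb : b ≤ (m:ℤ)+1) :
    podd m a b = false := by
  simp only [podd]
  rw [decide_eq_false (by omega), decide_eq_false (by omega)]
  rfl

private lemma podd_ff' {m : ℕ} {a b : ℤ} (ha : (m:ℤ)+1 < a) (hb : (m:ℤ)+1 < b) :
    podd m a b = false := by
  simp only [podd]
  rw [decide_eq_true ha, decide_eq_true hb]
  rfl

private lemma glRel_even {m n : ℕ} {U : Type*} [Ring U] {E : ℤ → ℤ → U}
    (hE : glRel m n E) {a b c d : ℤ}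
    (ha1 : 1 ≤ a) (ha2 : a ≤ (m:ℤ)+n+2) (hb1 : 1 ≤ b) (hb2 : b ≤ (m:ℤ)+n+2)
    (hc1 : 1 ≤ c) (hc2 : c ≤ (m:ℤ)+n+2) (hd1 : 1 ≤ d) (hd2 : d ≤ (m:ℤ)+n+2)
    (hp : podd m a b = false) :
    E a b * E c d = E c d * E a b +
      ((if b = c then E a d else 0) - (if d = a then E c b else 0)) := by
  have h := hE a b c d ha1 ha2 hb1 hb2 hc1 hc2 hd1 hd2
  simp only [ssgn, hp, Bool.false_and, Bool.false_eq_true, reduceIte, one_smul] at h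
  exact h

private lemma mem_Lsub {m n : ℕ} {U : Type*} [Ring U] [Algebra ℂ U] (E : ℤ → ℤ → U)
    {a b : ℤ} (h1 : 1 ≤ b) (h2 : b ≤ a) (h3 : a ≤ (m:ℤ)+n+2) : E a b ∈ Lsub m n E :=
  Algebra.subset_adjoin ⟨a, b, h1, h2, h3, rfl⟩

private lemma mem_Kid {m n : ℕ} {U : Type*} [Ring U] [Algebra ℂ U] (E : ℤ → ℤ → U)
    (u : U) {a b : ℤ} (h1 : 1 ≤ a) (h2 : a < b) (h3 : b ≤ (m:ℤ)+n+2) :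
    u * E a b ∈ Kid m n E :=
  Submodule.subset_span ⟨u, a, b, h1, h2, h3, rfl⟩

/-- The single-index expansions (5.7), as identities modulo the left ideal `U(G)G⁺`:
for `-r ≤ -i < 0`: `χ_{-i,c} f_{-r,s} ≡ c·f_{-r,s} + f_{-(i-1),s} f_{-r,-i}`, and
for `0 < i ≤ s`: `χ_{i,c} f_{-r,s} ≡ c·f_{-r,s} − f_{-r,i-1} f_{i,s}`. -/
theorem stmt15 (m n : ℕ) (U : Type*) [Ring U] [Algebra ℂ U] (E : ℤ → ℤ → U)
    (hE : glRel m n E) (φ : U →ₗ[ℂ] U)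
    (hrange : ∀ u : U, φ u ∈ Lsub m n E)
    (hfix : ∀ g ∈ Lsub m n E, φ g = g)
    (hker : ∀ x ∈ Kid m n E, φ x = 0)
    (hdec : ∀ u : U, u - φ u ∈ Kid m n E)
    (r s : ℤ) (hr0 : 0 ≤ r) (hrm : r ≤ (m : ℤ)) (hs0 : 0 ≤ s) (hsn : s ≤ (n : ℤ))
    (c : ℂ) :
    (∀ i : ℤ, 1 ≤ i → i ≤ r →
      chiOp m n E φ (-i) c (fV m E (-r) s)
        - (c • fV m E (-r) s + fV m E (-(i - 1)) s * fV m E (-r) (-i))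
        ∈ Kid m n E) ∧
    (∀ i : ℤ, 1 ≤ i → i ≤ s →
      chiOp m n E φ i c (fV m E (-r) s)
        - (c • fV m E (-r) s - fV m E (-r) (i - 1) * fV m E i s)
        ∈ Kid m n E) := by
  set f : U := fV m E (-r) s with hfdef
  constructor
  · intro i hi1 hir
    -- convert `f_{-(i-1),s}` to raw matrix-unit form
    have hc1 : fV m E (-(i - 1)) s = E ((m:ℤ) + s + 2) ((m:ℤ) + (-i) + 2) := by
      show E ((m:ℤ) + s + 2) ((m:ℤ) + (-(i - 1)) + 1) = _
      rw [show ((m:ℤ) + (-(i - 1)) + 1) = ((m:ℤ) + (-i) + 2) by ring]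
    rw [hc1]
    set G : U := E ((m:ℤ) + s + 2) ((m:ℤ) + (-i) + 2) with hG
    set A : U := fV m E (-r) (-i) * G with hA
    set B : U := G * fV m E (-r) (-i) with hB
    set S : U := ∑ k ∈ Finset.Icc (-(m:ℤ)) (-i),
        fV m E k (-i) * f * eV m E k (-i) with hS
    have hsum : (∑ k ∈ Finset.Icc (-(m:ℤ)) (-i), fV m E k (-i) * eV m E k (-i)) * f
        = S - A := by
      rw [Finset.sum_mul, hS]
      have hterm : ∀ k ∈ Finset.Icc (-(m:ℤ)) (-i),
          fV m E k (-i) * eV m E k (-i) * f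
            = fV m E k (-i) * f * eV m E k (-i)
              - (if k = -r then fV m E k (-i) * G else 0) := by
        intro k hk
        simp only [Finset.mem_Icc] at hk
        have hrel := glRel_even hE
          (a := (m:ℤ) + k + 1) (b := (m:ℤ) + (-i) + 2)
          (c := (m:ℤ) + s + 2) (d := (m:ℤ) + (-r) + 1)
          (by omega) (by omega) (by omega) (by omega)
          (by omega) (by omega) (by omega) (by omega)
          (podd_ff (by omega) (by omega))
        rw [if_neg (by omega),
          if_congr (by omega : ((m:ℤ) + (-r) + 1 = (m:ℤ) + k + 1) ↔ (k = -r)) rfl rfl]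
          at hrel
        have h2 : eV m E k (-i) * f
            = f * eV m E k (-i) + (0 - if k = -r then G else 0) := hrel
        rw [mul_assoc, h2]
        split <;> noncomm_ring
      rw [Finset.sum_congr rfl hterm, Finset.sum_sub_distrib,
        Finset.sum_ite_eq' (Finset.Icc (-(m:ℤ)) (-i)) (-r)
          (fun k => fV m E k (-i) * G),
        if_pos (by simp only [Finset.mem_Icc]; omega)]
    have hOf : OmegaV m n E (-i) * f = (f + A) - S := by
      rw [show OmegaV m n E (-i)
          = 1 - ∑ k ∈ Finset.Icc (-(m:ℤ)) (-i), fV m E k (-i) * eV m E k (-i)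
        from if_pos (by omega), sub_mul, one_mul, hsum]
      abel
    have hfA : f + A ∈ Lsub m n E := by
      refine add_mem (mem_Lsub E (by omega) (by omega) (by omega)) ?_
      exact mul_mem (mem_Lsub E (by omega) (by omega) (by omega))
        (mem_Lsub E (by omega) (by omega) (by omega))
    have hSK : S ∈ Kid m n E := by
      refine Submodule.sum_mem _ fun k hk => ?_
      simp only [Finset.mem_Icc] at hk
      exact mem_Kid E _ (by omega) (by omega) (by omega)
    have hphi : φ (OmegaV m n E (-i) * f) = f + A := by
      rw [hOf, map_sub, hker S hSK, hfix _ hfA, sub_zero]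
    have hAB : f + A = B := by
      have hrel := glRel_even hE
        (a := (m:ℤ) + (-i) + 2) (b := (m:ℤ) + (-r) + 1)
        (c := (m:ℤ) + s + 2) (d := (m:ℤ) + (-i) + 2)
        (by omega) (by omega) (by omega) (by omega)
        (by omega) (by omega) (by omega) (by omega)
        (podd_ff (by omega) (by omega))
      rw [if_neg (by omega), if_pos rfl] at hrel
      have h2 : fV m E (-r) (-i) * G = G * fV m E (-r) (-i) + (0 - f) := hrel
      rw [hA, hB, h2]
      abel
    show c • f + φ (OmegaV m n E (-i) * f) - (c • f + B) ∈ Kid m n E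
    rw [hphi, hAB, sub_self]
    exact Submodule.zero_mem _
  · intro i hi1 his
    have hc1 : fV m E (-r) (i - 1) = E ((m:ℤ) + i + 1) ((m:ℤ) + (-r) + 1) := by
      show E ((m:ℤ) + (i - 1) + 2) ((m:ℤ) + (-r) + 1) = _
      rw [show ((m:ℤ) + (i - 1) + 2) = ((m:ℤ) + i + 1) by ring]
    rw [hc1]
    set G : U := E ((m:ℤ) + i + 1) ((m:ℤ) + (-r) + 1) with hG
    set A : U := fV m E i s * G with hA
    set B : U := G * fV m E i s with hB
    set S : U := ∑ k ∈ Finset.Icc i (n:ℤ),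
        fV m E i k * f * eV m E i k with hS
    have hsum : (∑ k ∈ Finset.Icc i (n:ℤ), fV m E i k * eV m E i k) * f
        = S + A := by
      rw [Finset.sum_mul, hS]
      have hterm : ∀ k ∈ Finset.Icc i (n:ℤ),
          fV m E i k * eV m E i k * f
            = fV m E i k * f * eV m E i k
              + (if k = s then fV m E i k * G else 0) := by
        intro k hk
        simp only [Finset.mem_Icc] at hk
        have hrel := glRel_even hE
          (a := (m:ℤ) + i + 1) (b := (m:ℤ) + k + 2)
          (c := (m:ℤ) + s + 2) (d := (m:ℤ) + (-r) + 1)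
          (by omega) (by omega) (by omega) (by omega)
          (by omega) (by omega) (by omega) (by omega)
          (podd_ff' (by omega) (by omega))
        rw [if_congr (by omega : ((m:ℤ) + k + 2 = (m:ℤ) + s + 2) ↔ (k = s)) rfl rfl,
          if_neg (show ¬((m:ℤ) + (-r) + 1 = (m:ℤ) + i + 1) by omega)] at hrel
        have h2 : eV m E i k * f
            = f * eV m E i k + ((if k = s then G else 0) - 0) := hrel
        rw [mul_assoc, h2]
        split <;> noncomm_ring
      rw [Finset.sum_congr rfl hterm, Finset.sum_add_distrib,
        Finset.sum_ite_eq' (Finset.Icc i (n:ℤ)) s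
          (fun k => fV m E i k * G),
        if_pos (by simp only [Finset.mem_Icc]; omega)]
    have hOf : OmegaV m n E i * f = (f - A) - S := by
      rw [show OmegaV m n E i
          = 1 - ∑ k ∈ Finset.Icc i (n:ℤ), fV m E i k * eV m E i k
        from if_neg (by omega), sub_mul, one_mul, hsum]
      abel
    have hfA : f - A ∈ Lsub m n E := by
      refine sub_mem (mem_Lsub E (by omega) (by omega) (by omega)) ?_
      exact mul_mem (mem_Lsub E (by omega) (by omega) (by omega))
        (mem_Lsub E (by omega) (by omega) (by omega))
    have hSK : S ∈ Kid m n E := by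
      refine Submodule.sum_mem _ fun k hk => ?_
      simp only [Finset.mem_Icc] at hk
      exact mem_Kid E _ (by omega) (by omega) (by omega)
    have hphi : φ (OmegaV m n E i * f) = f - A := by
      rw [hOf, map_sub, hker S hSK, hfix _ hfA, sub_zero]
    have hAB : f - A = -B := by
      have hrel := glRel_even hE
        (a := (m:ℤ) + s + 2) (b := (m:ℤ) + i + 1)
        (c := (m:ℤ) + i + 1) (d := (m:ℤ) + (-r) + 1)
        (by omega) (by omega) (by omega) (by omega)
        (by omega) (by omega) (by omega) (by omega)
        (podd_ff' (by omega) (by omega))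
      rw [if_pos rfl, if_neg (by omega)] at hrel
      have h2 : fV m E i s * G = G * fV m E i s + (f - 0) := hrel
      rw [hA, hB, h2]
      abel
    show c • f + φ (OmegaV m n E i * f) - (c • f - B) ∈ Kid m n E
    rw [hphi, hAB]
    have : c • f + -B - (c • f - B) = 0 := by abel
    rw [this]
    exact Submodule.zero_mem _
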